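/- Continuous weak maximum principle: Suppose c : ℝᵈ → ℝ is twice continuously differentiable on Ω and continuous on cl(Ω), and L[c](x) ≤ 0 for all x ∈ Ω. Then the maximum of c over cl(Ω) is at most max(0, max_{x ∈ ∂Ω} c(x)); that is, max_{x ∈ cl(Ω)} c(x) ≤ max(0, max_{x ∈ ∂Ω} c(x)). -/

import Mathlib

noncomputable section

/-- Partial derivative in the `i`-th coordinate direction. -/
def pd (d : ℕ) (f : EuclideanSpace ℝ (Fin d) → ℝ) (i : Fin d)
    (x : EuclideanSpace ℝ (Fin d)) : ℝ :=
  fderiv ℝ f x (EuclideanSpace.single i 1)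

/-- The elliptic operator in divergence form
`L[c](x) = −div(D(x)·grad c(x)) + v(x)·grad c(x) + α(x) c(x)`. -/
def Lop (d : ℕ) (D : EuclideanSpace ℝ (Fin d) → Matrix (Fin d) (Fin d) ℝ)
    (v : EuclideanSpace ℝ (Fin d) → EuclideanSpace ℝ (Fin d))
    (α : EuclideanSpace ℝ (Fin d) → ℝ)
    (c : EuclideanSpace ℝ (Fin d) → ℝ) (x : EuclideanSpace ℝ (Fin d)) : ℝ :=
  -(∑ i, pd d (fun y => ∑ j, D y i j * pd d c j y) i x)
    + (∑ i, v x i * pd d c i x) + α x * c x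

open Filter Matrix

section helpers

lemma second_deriv_nonpos {f : ℝ → ℝ} {L : ℝ}
    (hmax : IsLocalMax f 0)
    (hdiff : ∀ᶠ t in nhds (0:ℝ), DifferentiableAt ℝ f t)
    (hL : HasDerivAt (deriv f) L 0) : L ≤ 0 := by
  by_contra hcon
  push_neg at hcon
  have h0 : deriv f 0 = 0 := hmax.deriv_eq_zero
  have hslope : Tendsto (slope (deriv f) 0) (nhdsWithin 0 {(0:ℝ)}ᶜ) (nhds L) :=
    hasDerivAt_iff_tendsto_slope.mp hL
  have hev : ∀ᶠ t in nhdsWithin 0 {(0:ℝ)}ᶜ, 0 < slope (deriv f) 0 t :=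
    hslope.eventually (eventually_gt_nhds hcon)
  have hev' : ∀ᶠ t in nhdsWithin (0:ℝ) (Set.Ioi 0), 0 < deriv f t := by
    filter_upwards [hev.filter_mono (nhdsWithin_mono _ (fun t ht => ne_of_gt ht)),
      self_mem_nhdsWithin] with t ht ht'
    have htpos : (0:ℝ) < t := ht'
    have hts : slope (deriv f) 0 t = deriv f t / t := by
      simp [slope_def_field, h0]
    rw [hts] at ht
    have := mul_pos ht htpos
    rwa [div_mul_cancel₀ _ (ne_of_gt htpos)] at this
  obtain ⟨δ₁, hδ₁pos, hδ₁⟩ := Metric.eventually_nhds_iff.mp (hdiff.and hmax)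
  obtain ⟨δ₂, hδ₂mem, hδ₂⟩ := mem_nhdsGT_iff_exists_Ioo_subset.mp hev'
  set ε := min (δ₁ / 2) (δ₂ / 2) with hε
  have hδ₂pos : (0:ℝ) < δ₂ := hδ₂mem
  have hεpos : 0 < ε := lt_min (by linarith) (by linarith)
  have hεδ₁ : ε < δ₁ := lt_of_le_of_lt (min_le_left _ _) (by linarith)
  have hεδ₂ : ε < δ₂ := lt_of_le_of_lt (min_le_right _ _) (by linarith)
  have hmono : StrictMonoOn f (Set.Icc 0 ε) := by
    apply strictMonoOn_of_deriv_pos (convex_Icc 0 ε)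
    · intro t ht
      have : dist t 0 < δ₁ := by
        rw [Real.dist_eq, sub_zero, abs_of_nonneg ht.1]
        exact lt_of_le_of_lt ht.2 hεδ₁
      exact ((hδ₁ this).1).continuousAt.continuousWithinAt
    · intro t ht
      rw [interior_Icc] at ht
      exact hδ₂ ⟨ht.1, lt_trans ht.2 hεδ₂⟩
  have : f 0 < f ε := hmono (Set.left_mem_Icc.mpr (le_of_lt hεpos))
    (Set.right_mem_Icc.mpr (le_of_lt hεpos)) hεpos
  have hle : f ε ≤ f 0 := by
    refine (hδ₁ ?_).2
    rw [Real.dist_eq, sub_zero, abs_of_pos hεpos]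
    exact hεδ₁
  linarith

lemma psd_of_quad {d : ℕ} (A : Matrix (Fin d) (Fin d) ℝ) (h : A.IsSymm)
    (h2 : ∀ ξ : Fin d → ℝ, 0 ≤ ∑ i, ∑ j, ξ i * A i j * ξ j) : A.PosSemidef := by
  refine Matrix.posSemidef_iff_dotProduct_mulVec.mpr ⟨?_, fun x => ?_⟩
  · rw [Matrix.IsHermitian, conjTranspose_eq_transpose_of_trivial]; exact h
  · have := h2 x
    simp only [dotProduct, Matrix.mulVec, Pi.star_apply, star_trivial]
    simpa [dotProduct, Finset.mul_sum, mul_assoc] using this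

open scoped MatrixOrder in
lemma trace_nonpos {d : ℕ} (Dm : Matrix (Fin d) (Fin d) ℝ) (hDm : Dm.PosSemidef)
    (H : Matrix (Fin d) (Fin d) ℝ)
    (hH : ∀ ξ : Fin d → ℝ, ∑ i, ∑ j, ξ i * ξ j * H i j ≤ 0) :
    ∑ i, ∑ j, Dm i j * H i j ≤ 0 := by
  set S := CFC.sqrt Dm with hSdef
  have hS : S * S = Dm := CFC.sqrt_mul_sqrt_self Dm hDm.nonneg
  have hSsymm : ∀ i j, S i j = S j i := by
    intro i j
    have h := (CFC.sqrt_nonneg Dm).posSemidef.isHermitian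
    calc S i j = Sᴴ i j := by rw [h]
    _ = S j i := by simp [conjTranspose_apply]
  calc ∑ i, ∑ j, Dm i j * H i j
      = ∑ i, ∑ j, ∑ k, S i k * S k j * H i j := by
        simp_rw [← hS, Matrix.mul_apply, Finset.sum_mul]
    _ = ∑ i, ∑ k, ∑ j, S i k * S k j * H i j :=
        Finset.sum_congr rfl fun i _ => Finset.sum_comm
    _ = ∑ k, ∑ i, ∑ j, S i k * S k j * H i j := Finset.sum_comm
    _ = ∑ k, ∑ i, ∑ j, S k i * S k j * H i j := by
        refine Finset.sum_congr rfl fun k _ => Finset.sum_congr rfl fun i _ =>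
          Finset.sum_congr rfl fun j _ => ?_
        rw [← hSsymm k i]
    _ ≤ 0 := Finset.sum_nonpos fun k _ => hH (fun i => S k i)


lemma pd_contDiffOn' {Ω : Set (EuclideanSpace ℝ (Fin d))} (hΩ : IsOpen Ω)
    {u : EuclideanSpace ℝ (Fin d) → ℝ} (hu : ContDiffOn ℝ 2 u Ω) (j : Fin d) :
    ContDiffOn ℝ 1 (pd d u j) Ω := by
  have h1 : ContDiffOn ℝ 1 (fderiv ℝ u) Ω := hu.fderiv_of_isOpen hΩ (by norm_num)
  exact (ContinuousLinearMap.apply ℝ ℝ (EuclideanSpace.single j 1)).contDiff.comp_contDiffOn h1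

lemma basis_expand {d : ℕ} (η : EuclideanSpace ℝ (Fin d)) (T : EuclideanSpace ℝ (Fin d) →L[ℝ] ℝ) :
    T η = ∑ j, η j * T (EuclideanSpace.single j 1) := by
  have h : η = ∑ j, η j • EuclideanSpace.single j 1 := by
    ext i
    rw [WithLp.ofLp_sum, Finset.sum_apply]
    simp [EuclideanSpace.single_apply]
  conv_lhs => rw [h]
  rw [map_sum]
  simp [smul_eq_mul]

lemma hess_quadform {d : ℕ} {Ω : Set (EuclideanSpace ℝ (Fin d))} (hΩ : IsOpen Ω)
    {u : EuclideanSpace ℝ (Fin d) → ℝ} (hu : ContDiffOn ℝ 2 u Ω)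
    {x₀ : EuclideanSpace ℝ (Fin d)} (hx₀ : x₀ ∈ Ω) (hmax : IsLocalMax u x₀) (ξ : Fin d → ℝ) :
    ∑ i, ∑ j, ξ i * ξ j * pd d (pd d u j) i x₀ ≤ 0 := by
  classical
  set ξ' : EuclideanSpace ℝ (Fin d) := (WithLp.equiv 2 _).symm ξ with hξ'def
  have hline : Continuous fun t : ℝ => x₀ + t • ξ' := by continuity
  have h00 : (fun t : ℝ => x₀ + t • ξ') 0 = x₀ := by simp
  have hΩev : ∀ᶠ t in nhds (0:ℝ), x₀ + t • ξ' ∈ Ω := by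
    have hca := hline.continuousAt (x := 0)
    exact hca.preimage_mem_nhds
      (show Ω ∈ nhds (x₀ + (0:ℝ) • ξ') by rw [zero_smul, add_zero]; exact hΩ.mem_nhds hx₀)
  set f : ℝ → ℝ := fun t => u (x₀ + t • ξ') with hfdef
  have hfmax : IsLocalMax f 0 := by
    have hm : IsLocalMax u ((fun t : ℝ => x₀ + t • ξ') 0) := by rw [h00]; exact hmax
    exact IsLocalMax.comp_continuous (g := fun t : ℝ => x₀ + t • ξ') (b := (0:ℝ)) hm
      hline.continuousAt
  have hline' : ∀ t : ℝ, HasDerivAt (fun s : ℝ => x₀ + s • ξ') ξ' t := by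
    intro t
    simpa using ((hasDerivAt_id t).smul_const ξ').const_add x₀
  set g : EuclideanSpace ℝ (Fin d) → ℝ := fun y => fderiv ℝ u y ξ' with hgdef
  have hudiff : ∀ᶠ t in nhds (0:ℝ), DifferentiableAt ℝ f t ∧ deriv f t = g (x₀ + t • ξ') := by
    filter_upwards [hΩev] with t ht
    have hu' : DifferentiableAt ℝ u (x₀ + t • ξ') :=
      (hu.differentiableOn (by norm_num)).differentiableAt (hΩ.mem_nhds ht)
    have hcomp : HasDerivAt f (fderiv ℝ u (x₀ + t • ξ') ξ') t :=
      hu'.hasFDerivAt.comp_hasDerivAt t (hline' t)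
    exact ⟨hcomp.differentiableAt, hcomp.deriv⟩
  have hgd : ∀ j, DifferentiableAt ℝ (pd d u j) x₀ := fun j =>
    (((pd_contDiffOn' hΩ hu j).differentiableOn one_ne_zero) x₀ hx₀).differentiableAt (hΩ.mem_nhds hx₀)
  have hgeq : g = fun y => ∑ j, ξ j * pd d u j y := by
    funext y
    exact basis_expand ξ' (fderiv ℝ u y)
  have hgHasF : HasFDerivAt g (∑ j, ξ j • fderiv ℝ (pd d u j) x₀) x₀ := by
    rw [hgeq]
    exact HasFDerivAt.fun_sum fun j _ => ((hgd j).hasFDerivAt.const_mul (ξ j))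
  have hcomp2 : HasDerivAt (fun t : ℝ => g (x₀ + t • ξ'))
      ((∑ j, ξ j • fderiv ℝ (pd d u j) x₀) ξ') (0:ℝ) := by
    have hgHasF' : HasFDerivAt g (∑ j, ξ j • fderiv ℝ (pd d u j) x₀) (x₀ + (0:ℝ) • ξ') := by
      rw [zero_smul, add_zero]; exact hgHasF
    exact hgHasF'.comp_hasDerivAt 0 (hline' 0)
  have hL : HasDerivAt (deriv f) ((∑ j, ξ j • fderiv ℝ (pd d u j) x₀) ξ') (0:ℝ) := by
    apply hcomp2.congr_of_eventuallyEq
    filter_upwards [hudiff] with t ht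
    exact ht.2
  have hLle := second_deriv_nonpos hfmax (by filter_upwards [hudiff] with t ht; exact ht.1) hL
  calc ∑ i, ∑ j, ξ i * ξ j * pd d (pd d u j) i x₀
      = (∑ j, ξ j • fderiv ℝ (pd d u j) x₀) ξ' := by
        rw [ContinuousLinearMap.sum_apply]
        rw [Finset.sum_comm]
        refine Finset.sum_congr rfl fun j _ => ?_
        rw [ContinuousLinearMap.smul_apply, basis_expand ξ' (fderiv ℝ (pd d u j) x₀),
          smul_eq_mul, Finset.mul_sum]
        refine Finset.sum_congr rfl fun i _ => ?_
        show ξ i * ξ j * pd d (pd d u j) i x₀ = ξ j * (ξ i * pd d (pd d u j) i x₀)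
        ring
    _ ≤ 0 := hLle


variable {d : ℕ}

lemma proj_contDiff (i0 : Fin d) : ContDiff ℝ ⊤ (fun x : EuclideanSpace ℝ (Fin d) => x i0) :=
  (EuclideanSpace.proj (𝕜 := ℝ) i0).contDiff

lemma exp_contDiff (γ : ℝ) (i0 : Fin d) :
    ContDiff ℝ ⊤ (fun x : EuclideanSpace ℝ (Fin d) => Real.exp (γ * x i0)) :=
  Real.contDiff_exp.comp (contDiff_const.mul (proj_contDiff i0))

lemma exp_hasFDerivAt (γ : ℝ) (i0 : Fin d) (x : EuclideanSpace ℝ (Fin d)) :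
    HasFDerivAt (fun y : EuclideanSpace ℝ (Fin d) => Real.exp (γ * y i0))
      ((γ * Real.exp (γ * x i0)) • (EuclideanSpace.proj i0 : EuclideanSpace ℝ (Fin d) →L[ℝ] ℝ)) x := by
  have h1 : HasFDerivAt (fun y : EuclideanSpace ℝ (Fin d) => γ * y i0)
      (γ • (EuclideanSpace.proj i0 : EuclideanSpace ℝ (Fin d) →L[ℝ] ℝ)) x := by
    have h0 : HasFDerivAt (EuclideanSpace.proj i0 : EuclideanSpace ℝ (Fin d) →L[ℝ] ℝ)
        (EuclideanSpace.proj i0 : EuclideanSpace ℝ (Fin d) →L[ℝ] ℝ) x :=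
      ContinuousLinearMap.hasFDerivAt _
    exact h0.const_mul γ
  have h2 := (Real.hasDerivAt_exp (γ * x i0)).comp_hasFDerivAt x h1
  simpa [smul_smul, mul_comm, Function.comp_def] using h2

lemma pd_exp (γ : ℝ) (i0 j : Fin d) (x : EuclideanSpace ℝ (Fin d)) :
    pd d (fun y => Real.exp (γ * y i0)) j x
      = (if j = i0 then 1 else 0) * (γ * Real.exp (γ * x i0)) := by
  rw [pd, (exp_hasFDerivAt γ i0 x).fderiv]
  by_cases h : j = i0 <;>
    simp [EuclideanSpace.single_apply, h, eq_comm] <;> simp [Ne.symm h]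

lemma pd_contDiff {g : EuclideanSpace ℝ (Fin d) → ℝ} (hg : ContDiff ℝ 2 g) (j : Fin d) :
    ContDiff ℝ 1 (pd d g j) := by
  have h1 : ContDiff ℝ 1 (fderiv ℝ g) := hg.fderiv_right (by norm_num)
  exact (ContinuousLinearMap.apply ℝ ℝ (EuclideanSpace.single j 1)).contDiff.comp h1

lemma Lop_add {Ω : Set (EuclideanSpace ℝ (Fin d))} (hΩopen : IsOpen Ω)
    (D : EuclideanSpace ℝ (Fin d) → Matrix (Fin d) (Fin d) ℝ)
    (hD : ∀ i j, ContDiff ℝ 1 (fun x => D x i j))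
    (v : EuclideanSpace ℝ (Fin d) → EuclideanSpace ℝ (Fin d))
    (α : EuclideanSpace ℝ (Fin d) → ℝ)
    {f : EuclideanSpace ℝ (Fin d) → ℝ} (hf : ContDiffOn ℝ 2 f Ω)
    {g : EuclideanSpace ℝ (Fin d) → ℝ} (hg : ContDiff ℝ 2 g) (ε : ℝ)
    {x : EuclideanSpace ℝ (Fin d)} (hx : x ∈ Ω) :
    Lop d D v α (fun y => f y + ε * g y) x
      = Lop d D v α f x + ε * Lop d D v α g x := by
  have hfdiffat : ∀ y ∈ Ω, DifferentiableAt ℝ f y := fun y hy =>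
    ((hf.differentiableOn (by norm_num)) y hy).differentiableAt (hΩopen.mem_nhds hy)
  have hgdiffat : ∀ y, DifferentiableAt ℝ g y := fun y =>
    (hg.differentiable (by norm_num)).differentiableAt
  have hpdadd : ∀ j, ∀ y ∈ Ω,
      pd d (fun z => f z + ε * g z) j y = pd d f j y + ε * pd d g j y := by
    intro j y hy
    have : fderiv ℝ (fun z => f z + ε * g z) y = fderiv ℝ f y + ε • fderiv ℝ g y := by
      rw [fderiv_fun_add (hfdiffat y hy) ((hgdiffat y).const_mul ε), fderiv_const_mul (hgdiffat y)]
    simp only [pd] at this ⊢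
    rw [this]
    simp
  have hpdfd : ∀ j, DifferentiableAt ℝ (pd d f j) x := fun j =>
    (((pd_contDiffOn' hΩopen hf j).differentiableOn one_ne_zero) x hx).differentiableAt
      (hΩopen.mem_nhds hx)
  have hpdgd : ∀ j y, DifferentiableAt ℝ (pd d g j) y := fun j y =>
    ((pd_contDiff hg j).differentiable one_ne_zero).differentiableAt
  have hDdiff : ∀ i j (y : EuclideanSpace ℝ (Fin d)), DifferentiableAt ℝ (fun z => D z i j) y :=
    fun i j y => ((hD i j).differentiable one_ne_zero).differentiableAt
  have hdivterm : ∀ i,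
      pd d (fun y => ∑ j, D y i j * pd d (fun z => f z + ε * g z) j y) i x
        = pd d (fun y => ∑ j, D y i j * pd d f j y) i x
          + ε * pd d (fun y => ∑ j, D y i j * pd d g j y) i x := by
    intro i
    have hA : DifferentiableAt ℝ (fun y => ∑ j, D y i j * pd d f j y) x :=
      DifferentiableAt.fun_sum fun j _ => (hDdiff i j x).mul (hpdfd j)
    have hB : DifferentiableAt ℝ (fun y => ∑ j, D y i j * pd d g j y) x :=
      DifferentiableAt.fun_sum fun j _ => (hDdiff i j x).mul (hpdgd j x)
    have hev : (fun y => ∑ j, D y i j * pd d (fun z => f z + ε * g z) j y)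
        =ᶠ[nhds x] (fun y => (∑ j, D y i j * pd d f j y)
            + ε * (∑ j, D y i j * pd d g j y)) := by
      filter_upwards [hΩopen.mem_nhds hx] with y hy
      rw [Finset.mul_sum, ← Finset.sum_add_distrib]
      refine Finset.sum_congr rfl fun j _ => ?_
      rw [hpdadd j y hy]
      ring
    have : fderiv ℝ (fun y => ∑ j, D y i j * pd d (fun z => f z + ε * g z) j y) x
        = fderiv ℝ (fun y => ∑ j, D y i j * pd d f j y) x
          + ε • fderiv ℝ (fun y => ∑ j, D y i j * pd d g j y) x := by
      rw [hev.fderiv_eq, fderiv_fun_add hA (hB.const_mul ε), fderiv_const_mul hB]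
    simp only [pd] at this ⊢
    rw [this]
    simp
  simp only [Lop]
  rw [Finset.sum_congr rfl fun i _ => hdivterm i,
    Finset.sum_congr rfl (fun i _ =>
      show v x i * pd d (fun z => f z + ε * g z) i x
          = v x i * pd d f i x + ε * (v x i * pd d g i x) by rw [hpdadd i x hx]; ring),
    Finset.sum_add_distrib, Finset.sum_add_distrib]
  simp only [← Finset.mul_sum]
  ring

lemma Lop_exp (D : EuclideanSpace ℝ (Fin d) → Matrix (Fin d) (Fin d) ℝ)
    (hD : ∀ i j, ContDiff ℝ 1 (fun x => D x i j))
    (v : EuclideanSpace ℝ (Fin d) → EuclideanSpace ℝ (Fin d))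
    (α : EuclideanSpace ℝ (Fin d) → ℝ) (γ : ℝ) (i0 : Fin d)
    (x : EuclideanSpace ℝ (Fin d)) :
    Lop d D v α (fun y => Real.exp (γ * y i0)) x
      = Real.exp (γ * x i0) * (α x + γ * v x i0
          - γ * (∑ i, pd d (fun y => D y i i0) i x) - γ ^ 2 * D x i0 i0) := by
  have hφd : ∀ y, DifferentiableAt ℝ (fun z : EuclideanSpace ℝ (Fin d) =>
      Real.exp (γ * z i0)) y := fun y => (exp_hasFDerivAt γ i0 y).differentiableAt
  have hDdiff : ∀ i j (y : EuclideanSpace ℝ (Fin d)), DifferentiableAt ℝ (fun z => D z i j) y :=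
    fun i j y => ((hD i j).differentiable one_ne_zero).differentiableAt
  have hinner : ∀ i : Fin d, (fun y : EuclideanSpace ℝ (Fin d) =>
        ∑ j, D y i j * pd d (fun z => Real.exp (γ * z i0)) j y)
      = fun y => D y i i0 * (γ * Real.exp (γ * y i0)) := by
    intro i
    funext y
    simp only [pd_exp, mul_ite, mul_one, mul_zero, ite_mul, zero_mul, one_mul]
    simp [Finset.sum_ite_eq']
  have hψ : ∀ (i : Fin d) (y : EuclideanSpace ℝ (Fin d)),
      pd d (fun z => γ * Real.exp (γ * z i0)) i y
        = γ * ((if i = i0 then 1 else 0) * (γ * Real.exp (γ * y i0))) := by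
    intro i y
    show (fderiv ℝ (fun z : EuclideanSpace ℝ (Fin d) => γ * Real.exp (γ * z i0)) y) _ = _
    rw [fderiv_const_mul (hφd y)]
    rw [ContinuousLinearMap.smul_apply, smul_eq_mul]
    rw [← pd_exp γ i0 i y]
    rfl
  have hdiv : ∀ i : Fin d,
      pd d (fun y => ∑ j, D y i j * pd d (fun z => Real.exp (γ * z i0)) j y) i x
        = D x i i0 * (γ * ((if i = i0 then 1 else 0) * (γ * Real.exp (γ * x i0))))
          + (γ * Real.exp (γ * x i0)) * pd d (fun y => D y i i0) i x := by
    intro i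
    rw [hinner i]
    have hψd : DifferentiableAt ℝ (fun z : EuclideanSpace ℝ (Fin d) =>
        γ * Real.exp (γ * z i0)) x := (hφd x).const_mul γ
    have : fderiv ℝ (fun y : EuclideanSpace ℝ (Fin d) =>
          D y i i0 * (γ * Real.exp (γ * y i0))) x
        = D x i i0 • fderiv ℝ (fun z : EuclideanSpace ℝ (Fin d) => γ * Real.exp (γ * z i0)) x
          + (γ * Real.exp (γ * x i0)) • fderiv ℝ (fun y => D y i i0) x :=
      fderiv_mul (hDdiff i i0 x) hψd
    show (fderiv ℝ _ x) _ = _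
    rw [this, ContinuousLinearMap.add_apply, ContinuousLinearMap.smul_apply,
      ContinuousLinearMap.smul_apply, smul_eq_mul, smul_eq_mul, ← hψ i x]
    rfl
  simp only [Lop]
  rw [Finset.sum_congr rfl fun i _ => hdiv i]
  rw [Finset.sum_congr rfl fun i (_ : i ∈ Finset.univ) => congrArg (v x i * ·) (pd_exp γ i0 i x)]
  rw [Finset.sum_add_distrib]
  simp only [mul_ite, mul_one, mul_zero, ite_mul, zero_mul, one_mul, Finset.sum_ite_eq',
    Finset.mem_univ, if_true]
  rw [← Finset.mul_sum]
  ring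

lemma interior_Lop_nonneg {d : ℕ} {Ω : Set (EuclideanSpace ℝ (Fin d))} (hΩopen : IsOpen Ω)
    (D : EuclideanSpace ℝ (Fin d) → Matrix (Fin d) (Fin d) ℝ)
    (hD : ∀ i j, ContDiff ℝ 1 (fun x => D x i j))
    (hDsymm : ∀ x, (D x).IsSymm)
    {lam0 : ℝ} (hlam0 : 0 ≤ lam0)
    (hellip : ∀ x ∈ Ω, ∀ ξ : Fin d → ℝ,
      lam0 * (∑ i, ξ i ^ 2) ≤ (∑ i, ∑ j, ξ i * D x i j * ξ j))
    (v : EuclideanSpace ℝ (Fin d) → EuclideanSpace ℝ (Fin d))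
    (α : EuclideanSpace ℝ (Fin d) → ℝ) (hαnn : ∀ x ∈ Ω, 0 ≤ α x)
    {u : EuclideanSpace ℝ (Fin d) → ℝ} (hu : ContDiffOn ℝ 2 u Ω)
    {x₀ : EuclideanSpace ℝ (Fin d)} (hx₀ : x₀ ∈ Ω) (hmax : IsLocalMax u x₀)
    (hu0 : 0 ≤ u x₀) : 0 ≤ Lop d D v α u x₀ := by
  have hfd : fderiv ℝ u x₀ = 0 := hmax.fderiv_eq_zero
  have hpd0 : ∀ j, pd d u j x₀ = 0 := fun j => by simp [pd, hfd]
  have hpdiff : ∀ j, DifferentiableAt ℝ (pd d u j) x₀ := fun j =>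
    (((pd_contDiffOn' hΩopen hu j).differentiableOn one_ne_zero) x₀ hx₀).differentiableAt
      (hΩopen.mem_nhds hx₀)
  have hDdiff : ∀ i j, DifferentiableAt ℝ (fun y => D y i j) x₀ := fun i j =>
    ((hD i j).differentiable one_ne_zero).differentiableAt
  have hterm : ∀ i, pd d (fun y => ∑ j, D y i j * pd d u j y) i x₀
      = ∑ j, D x₀ i j * pd d (pd d u j) i x₀ := by
    intro i
    have hs : fderiv ℝ (fun y => ∑ j, D y i j * pd d u j y) x₀
        = ∑ j, (D x₀ i j • fderiv ℝ (pd d u j) x₀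
            + pd d u j x₀ • fderiv ℝ (fun y => D y i j) x₀) := by
      rw [fderiv_fun_sum (A := fun j y => D y i j * pd d u j y) (fun j _ => ((hDdiff i j).mul (hpdiff j)))]
      exact Finset.sum_congr rfl fun j _ => fderiv_mul (hDdiff i j) (hpdiff j)
    show fderiv ℝ _ x₀ (EuclideanSpace.single i 1) = _
    rw [hs]
    rw [ContinuousLinearMap.sum_apply]
    refine Finset.sum_congr rfl fun j _ => ?_
    rw [ContinuousLinearMap.add_apply, ContinuousLinearMap.smul_apply,
      ContinuousLinearMap.smul_apply, hpd0 j, zero_smul, add_zero, smul_eq_mul]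
    rfl
  have hquad : ∀ ξ : Fin d → ℝ,
      ∑ i, ∑ j, ξ i * ξ j * (Matrix.of fun i j => pd d (pd d u j) i x₀) i j ≤ 0 := by
    intro ξ
    simpa using hess_quadform hΩopen hu hx₀ hmax ξ
  have hPSD : (D x₀).PosSemidef := by
    refine psd_of_quad _ (hDsymm x₀) fun ξ => ?_
    refine le_trans ?_ (hellip x₀ hx₀ ξ)
    positivity
  have htr := trace_nonpos (D x₀) hPSD _ hquad
  have hvterm : (∑ i, v x₀ i * pd d u i x₀) = 0 := by simp [hpd0]
  have hdiv : (∑ i, pd d (fun y => ∑ j, D y i j * pd d u j y) i x₀)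
      = ∑ i, ∑ j, D x₀ i j * (Matrix.of fun i j => pd d (pd d u j) i x₀) i j := by
    exact Finset.sum_congr rfl fun i _ => hterm i
  rw [Lop, hvterm, hdiv]
  have : 0 ≤ α x₀ * u x₀ := mul_nonneg (hαnn x₀ hx₀) hu0
  linarith


lemma abs_coord_le_norm {d : ℕ} (x : EuclideanSpace ℝ (Fin d)) (i : Fin d) :
    |x i| ≤ ‖x‖ := by
  rw [EuclideanSpace.norm_eq]
  rw [show |x i| = Real.sqrt (|x i| ^ 2) by rw [Real.sqrt_sq_eq_abs, abs_abs]]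
  apply Real.sqrt_le_sqrt
  refine Finset.single_le_sum (f := fun j => ‖x j‖ ^ 2) (fun j _ => by positivity)
    (Finset.mem_univ i)

/-- Continuous weak maximum principle. -/
theorem continuous_weak_maximum_principle
    (d : ℕ) (hd : 1 ≤ d)
    (Ω : Set (EuclideanSpace ℝ (Fin d)))
    (hΩne : Ω.Nonempty) (hΩopen : IsOpen Ω) (hΩbd : Bornology.IsBounded Ω)
    (D : EuclideanSpace ℝ (Fin d) → Matrix (Fin d) (Fin d) ℝ)
    (hD : ∀ i j, ContDiff ℝ 1 (fun x => D x i j))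
    (hDsymm : ∀ x, (D x).IsSymm)
    (lam0 Lam : ℝ) (hlam0 : 0 < lam0) (hlamLam : lam0 ≤ Lam)
    (hellip : ∀ x ∈ Ω, ∀ ξ : Fin d → ℝ,
      lam0 * (∑ i, ξ i ^ 2) ≤ (∑ i, ∑ j, ξ i * D x i j * ξ j) ∧
      (∑ i, ∑ j, ξ i * D x i j * ξ j) ≤ Lam * (∑ i, ξ i ^ 2))
    (v : EuclideanSpace ℝ (Fin d) → EuclideanSpace ℝ (Fin d))
    (hv : ContinuousOn v Ω) (hvbd : ∃ M, ∀ x ∈ Ω, ‖v x‖ ≤ M)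
    (α : EuclideanSpace ℝ (Fin d) → ℝ)
    (hα : Continuous α) (hαnn : ∀ x ∈ Ω, 0 ≤ α x)
    (c : EuclideanSpace ℝ (Fin d) → ℝ)
    (hc : ContDiffOn ℝ 2 c Ω) (hccont : ContinuousOn c (closure Ω))
    (hLc : ∀ x ∈ Ω, Lop d D v α c x ≤ 0) :
    sSup (c '' closure Ω) ≤ max 0 (sSup (c '' (closure Ω \ Ω))) := by
  classical
  set K := closure Ω with hKdef
  have hKcl : IsClosed K := isClosed_closure
  have hK : IsCompact K := Metric.isCompact_of_isClosed_isBounded hKcl hΩbd.closure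
  have hKne : K.Nonempty := hΩne.closure
  set i0 : Fin d := ⟨0, hd⟩ with hi0
  -- the maximum of c on K
  obtain ⟨y₀, hy₀K, hy₀max⟩ := hK.exists_isMaxOn hKne hccont
  have hsSupK : sSup (c '' K) = c y₀ := by
    apply IsGreatest.csSup_eq
    exact ⟨Set.mem_image_of_mem c hy₀K, fun b hb => by
      obtain ⟨y, hy, rfl⟩ := hb; exact hy₀max hy⟩
  by_cases hM : c y₀ ≤ 0
  · rw [hsSupK]
    exact le_max_of_le_left hM
  push_neg at hM
  -- boundary is nonempty and compact
  set F := K \ Ω with hFdef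
  have hFcompact : IsCompact F := by
    rw [hFdef, Set.diff_eq]
    exact hK.inter_right hΩopen.isClosed_compl
  have hFne : F.Nonempty := by
    by_contra hFe
    rw [Set.not_nonempty_iff_eq_empty, Set.diff_eq_empty] at hFe
    have hcl : IsClosed Ω := closure_subset_iff_isClosed.mp hFe
    rcases isClopen_iff.mp ⟨hcl, hΩopen⟩ with h | h
    · exact hΩne.ne_empty h
    · have : Nontrivial (EuclideanSpace ℝ (Fin d)) := by
        refine ⟨EuclideanSpace.single i0 1, 0, ?_⟩
        intro hcontra
        have := congrFun (congrArg (fun (z : EuclideanSpace ℝ (Fin d)) (i : Fin d) => z i)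
          hcontra) i0
        simp [EuclideanSpace.single_apply] at this
      exact NormedSpace.unbounded_univ ℝ (EuclideanSpace ℝ (Fin d)) (h ▸ hΩbd)
  have hbddF : BddAbove (c '' F) :=
    (hFcompact.image_of_continuousOn (hccont.mono Set.diff_subset)).bddAbove
  -- bounds for the coefficients
  have hScont : Continuous fun x => ∑ i, pd d (fun y => D y i i0) i x := by
    refine continuous_finset_sum _ fun i _ => ?_
    have h1 : Continuous (fderiv ℝ (fun y => D y i i0)) :=
      (hD i i0).continuous_fderiv one_ne_zero
    exact (ContinuousLinearMap.apply ℝ ℝ (EuclideanSpace.single i 1)).continuous.comp h1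
  obtain ⟨A₀, hA₀⟩ := hK.exists_bound_of_continuousOn hScont.continuousOn
  obtain ⟨B₀, hB₀⟩ := hK.exists_bound_of_continuousOn hα.continuousOn
  obtain ⟨Mv₀, hMv₀⟩ := hvbd
  set A := max A₀ 0 with hA
  set B := max B₀ 0 with hB
  set Mv := max Mv₀ 0 with hMv
  have hAnn : 0 ≤ A := le_max_right _ _
  have hBnn : 0 ≤ B := le_max_right _ _
  have hMvnn : 0 ≤ Mv := le_max_right _ _
  set γ : ℝ := (A + Mv + B + 1) / lam0 + 1 with hγdef
  have hγ1 : 1 ≤ γ := by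
    have h0 : 0 ≤ (A + Mv + B + 1) / lam0 := by positivity
    rw [hγdef]
    linarith [h0]
  have hγpos : 0 < γ := lt_of_lt_of_le one_pos hγ1
  have hγlam : A + Mv + B + 1 ≤ γ * lam0 := by
    rw [hγdef, add_mul, div_mul_cancel₀ _ (ne_of_gt hlam0), one_mul]
    linarith
  -- the exponential weight
  set φ : EuclideanSpace ℝ (Fin d) → ℝ := fun y => Real.exp (γ * y i0) with hφdef
  have hφpos : ∀ y, 0 < φ y := fun y => Real.exp_pos _
  have hφcont : Continuous φ := (exp_contDiff γ i0).continuous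
  obtain ⟨C₀, hC₀⟩ := hK.exists_bound_of_continuousOn hφcont.continuousOn
  have hC₀pos : 0 < C₀ := lt_of_lt_of_le (hφpos y₀) (le_trans (le_abs_self _) (hC₀ y₀ hy₀K))
  -- Lop of φ is strictly negative on Ω
  have hLφ : ∀ x ∈ Ω, Lop d D v α φ x < 0 := by
    intro x hx
    have hxK : x ∈ K := subset_closure hx
    rw [hφdef, Lop_exp D hD v α γ i0 x]
    have he : 0 < Real.exp (γ * x i0) := Real.exp_pos _
    have h1 : α x ≤ B := le_trans (le_abs_self _) (le_trans (hB₀ x hxK) (le_max_left _ _))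
    have h2 : v x i0 ≤ Mv := le_trans (le_abs_self _)
      (le_trans (abs_coord_le_norm (v x) i0) (le_trans (hMv₀ x hx) (le_max_left _ _)))
    have h3 : -(∑ i, pd d (fun y => D y i i0) i x) ≤ A :=
      le_trans (neg_le_abs _) (le_trans (hA₀ x hxK) (le_max_left _ _))
    have h4 : lam0 ≤ D x i0 i0 := by
      have := (hellip x hx (fun j => if j = i0 then 1 else 0)).1
      simpa [Finset.sum_ite_eq', ite_mul, mul_ite] using this
    have h5 : γ * lam0 ≤ γ * D x i0 i0 := by nlinarith
    have h6 : γ * (A + Mv + B + 1) ≤ γ * (γ * lam0) := by nlinarith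
    have hkey : α x + γ * v x i0 - γ * (∑ i, pd d (fun y => D y i i0) i x)
        - γ ^ 2 * D x i0 i0 < 0 := by nlinarith
    exact mul_neg_of_pos_of_neg he hkey
  -- key estimate for every δ > 0
  have hmain : ∀ δ : ℝ, 0 < δ → c y₀ ≤ sSup (c '' F) + δ := by
    intro δ hδ
    set ε : ℝ := δ / C₀ with hεdef
    have hεpos : 0 < ε := div_pos hδ hC₀pos
    set w : EuclideanSpace ℝ (Fin d) → ℝ := fun y => c y + ε * φ y with hwdef
    have hwcont : ContinuousOn w K := hccont.add (continuousOn_const.mul hφcont.continuousOn)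
    obtain ⟨z, hzK, hzmax⟩ := hK.exists_isMaxOn hKne hwcont
    have hzF : z ∈ F := by
      by_contra hzF
      have hzΩ : z ∈ Ω := by
        rw [hFdef, Set.mem_diff] at hzF
        push_neg at hzF
        exact hzF hzK
      -- interior maximum: contradiction
      have hφC2 : ContDiff ℝ 2 φ := (exp_contDiff γ i0).of_le le_top
      have hwC2 : ContDiffOn ℝ 2 w Ω := hc.add (contDiff_const.mul hφC2).contDiffOn
      have hlocmax : IsLocalMax w z := hzmax.isLocalMax
        (mem_of_superset (hΩopen.mem_nhds hzΩ) subset_closure)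
      have hw0 : 0 ≤ w z := by
        have h1 : w y₀ ≤ w z := hzmax hy₀K
        have h2 : c y₀ ≤ w y₀ := by
          rw [hwdef]
          have := mul_nonneg (le_of_lt hεpos) (le_of_lt (hφpos y₀))
          simp only []
          linarith
        linarith
      have hkey := interior_Lop_nonneg hΩopen D hD hDsymm (le_of_lt hlam0)
        (fun x hx ξ => (hellip x hx ξ).1) v α hαnn hwC2 hzΩ hlocmax hw0
      have hadd := Lop_add hΩopen D hD v α hc hφC2 ε hzΩ
      have : Lop d D v α w z ≤ 0 + ε * Lop d D v α φ z := by
        rw [hwdef] at *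
        rw [hadd]
        have h5 := hLc z hzΩ
        have h6 := hLφ z hzΩ
        nlinarith
      have h7 : ε * Lop d D v α φ z < 0 := mul_neg_of_pos_of_neg hεpos (hLφ z hzΩ)
      linarith
    -- max point is on the boundary
    have h8 : c y₀ ≤ w z := by
      have h1 : w y₀ ≤ w z := hzmax hy₀K
      have h2 : c y₀ ≤ w y₀ := by
        have := mul_nonneg (le_of_lt hεpos) (le_of_lt (hφpos y₀))
        rw [hwdef]; simp only []; linarith
      linarith
    have h9 : c z ≤ sSup (c '' F) := le_csSup hbddF (Set.mem_image_of_mem c hzF)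
    have h10 : ε * φ z ≤ ε * C₀ := by
      have := le_trans (le_abs_self _) (hC₀ z hzK)
      nlinarith
    have h11 : ε * C₀ = δ := div_mul_cancel₀ _ (ne_of_gt hC₀pos)
    have h12 : w z = c z + ε * φ z := rfl
    linarith [h8, h9, h10]
  rw [hsSupK]
  refine le_max_of_le_right ?_
  by_contra hcon
  push_neg at hcon
  have hδ : 0 < (c y₀ - sSup (c '' F)) / 2 := by linarith
  have := hmain _ hδ
  linarith
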